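/- Let F = F_{2^n}, E/F an ordinary elliptic curve (a1 ≠ 0) in Weierstrass form Y² + a1·XY + a3·Y = X³ + a2·X² + a4·X + a6. Let P1, ..., Pm ∈ E(F) \ {0} and signs s_i ∈ {-1,1} with s1·P1 + ... + sm·Pm = 0. Then Σ_{i=1}^m Tr_{F/F_2}((x(P_i) + a2)/a1²) = 0 in F_2. -/

import Mathlib

open WeierstrassCurve

/-- The map `E(F) → F₂` sending `0 ↦ 0` and an affine point `P ↦ Tr_{F/F₂}((x(P) + a₂)/a₁²)`. -/
noncomputable def ecTraceMap {n : ℕ} (E : WeierstrassCurve.Affine (GaloisField 2 n)) :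
    E.Point → ZMod 2
  | .zero => 0
  | .some x _ _ => Algebra.trace (ZMod 2) (GaloisField 2 n) ((x + E.a₂) / E.a₁ ^ 2)

section Aux

variable {n : ℕ}

/-- The Frobenius as a `ZMod 2`-algebra automorphism of `GaloisField 2 n`. -/
noncomputable def frobAlgEquiv (n : ℕ) :
    GaloisField 2 n ≃ₐ[ZMod 2] GaloisField 2 n :=
  AlgEquiv.ofRingEquiv (f := frobeniusEquiv (GaloisField 2 n) 2) (fun c => by
    show (algebraMap (ZMod 2) (GaloisField 2 n) c) ^ 2 = algebraMap (ZMod 2) (GaloisField 2 n) c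
    rw [← map_pow]
    congr 1
    revert c; decide)

lemma frobAlgEquiv_apply (t : GaloisField 2 n) : frobAlgEquiv n t = t ^ 2 := rfl

lemma trace_sq (t : GaloisField 2 n) :
    Algebra.trace (ZMod 2) (GaloisField 2 n) (t ^ 2) =
      Algebra.trace (ZMod 2) (GaloisField 2 n) t := by
  apply (algebraMap (ZMod 2) (GaloisField 2 n)).injective
  rw [trace_eq_sum_automorphisms, trace_eq_sum_automorphisms]
  have key : ∀ σ : GaloisField 2 n ≃ₐ[ZMod 2] GaloisField 2 n,
      σ (t ^ 2) = ((frobAlgEquiv n).trans σ) t := fun σ => by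
    simp [AlgEquiv.trans_apply, frobAlgEquiv_apply]
  rw [Finset.sum_congr rfl fun σ _ => key σ]
  exact Fintype.sum_bijective _ (Equiv.bijective ⟨fun σ => (frobAlgEquiv n).trans σ,
    fun σ => (frobAlgEquiv n).symm.trans σ,
    fun σ => by ext x; simp, fun σ => by ext x; simp⟩) _ _ (fun σ => rfl)

lemma trace_sq_add_self (t : GaloisField 2 n) :
    Algebra.trace (ZMod 2) (GaloisField 2 n) (t ^ 2 + t) = 0 := by
  rw [map_add, trace_sq, CharTwo.add_self_eq_zero]

variable {E : WeierstrassCurve.Affine (GaloisField 2 n)} (ha1 : E.a₁ ≠ 0)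

lemma ecTraceMap_neg (P : E.Point) : ecTraceMap E (-P) = ecTraceMap E P := by
  rcases P with _ | @⟨x, y, h⟩ <;> rfl

open Classical in
include ha1 in
lemma ecTraceMap_add (P Q : E.Point) :
    ecTraceMap E (P + Q) = ecTraceMap E P + ecTraceMap E Q := by
  rcases P with _ | @⟨x₁, y₁, h₁⟩
  · rw [← Affine.Point.zero_def, zero_add]
    show ecTraceMap E Q = 0 + ecTraceMap E Q
    rw [zero_add]
  rcases Q with _ | @⟨x₂, y₂, h₂⟩
  · rw [← Affine.Point.zero_def, add_zero]
    show ecTraceMap E (.some _ _ h₁) = ecTraceMap E (.some _ _ h₁) + 0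
    rw [add_zero]
  by_cases hxy : x₁ = x₂ ∧ y₁ = E.negY x₂ y₂
  · rw [Affine.Point.add_of_Y_eq hxy.1 hxy.2]
    show (0 : ZMod 2) = _ + _
    rw [show (ecTraceMap E (.some _ _ h₁) : ZMod 2) = ecTraceMap E (.some _ _ h₂) by
      show Algebra.trace _ _ _ = Algebra.trace _ _ _; rw [hxy.1]]
    rw [CharTwo.add_self_eq_zero]
  · have hxy' : x₁ = x₂ → y₁ ≠ E.negY x₂ y₂ := fun hx hy => hxy ⟨hx, hy⟩
    rw [Affine.Point.add_some hxy]
    show Algebra.trace (ZMod 2) (GaloisField 2 n)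
        ((E.addX x₁ x₂ (E.slope x₁ x₂ y₁ y₂) + E.a₂) / E.a₁ ^ 2) = _ + _
    set L := E.slope x₁ x₂ y₁ y₂ with hL
    have h2 : (2 : GaloisField 2 n) = 0 := by
      have := CharP.cast_eq_zero (GaloisField 2 n) 2
      exact_mod_cast this
    have hkey : (E.addX x₁ x₂ L + E.a₂) / E.a₁ ^ 2 =
        (x₁ + E.a₂) / E.a₁ ^ 2 + (x₂ + E.a₂) / E.a₁ ^ 2 + ((L / E.a₁) ^ 2 + L / E.a₁) := by
      rw [Affine.addX]
      field_simp
      linear_combination (-(x₁ + x₂ + E.a₂)) * h2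
    rw [hkey, map_add, map_add, trace_sq_add_self, add_zero]
    rfl

end Aux

open Classical in
/-- If `P₁, …, Pₘ` are nonzero points of an ordinary elliptic curve over `F = F_{2ⁿ}` with
`±P₁ ± ⋯ ± Pₘ = 0`, then `∑ᵢ Tr_{F/F₂}((x(Pᵢ) + a₂)/a₁²) = 0`. -/
theorem stmt_9 (n : ℕ) (hn : n ≠ 0) (E : WeierstrassCurve.Affine (GaloisField 2 n))
    (hΔ : E.Δ ≠ 0) (ha1 : E.a₁ ≠ 0) (m : ℕ) (P : Fin m → E.Point) (hP : ∀ i, P i ≠ 0)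
    (s : Fin m → ℤ) (hs : ∀ i, s i = 1 ∨ s i = -1) (hrel : ∑ i, s i • P i = 0) :
    ∑ i, ecTraceMap E (P i) = 0 := by
  let f : E.Point →+ ZMod 2 := AddMonoidHom.mk' (ecTraceMap E) (ecTraceMap_add ha1)
  have hfP : ∀ i, ecTraceMap E (P i) = f (s i • P i) := by
    intro i
    rcases hs i with h | h <;> rw [h]
    · simp [f]
    · simp only [neg_smul, one_smul, map_neg]
      show ecTraceMap E (P i) = - ecTraceMap E (P i)
      rw [CharTwo.neg_eq]
  calc ∑ i, ecTraceMap E (P i) = ∑ i, f (s i • P i) := Finset.sum_congr rfl fun i _ => hfP i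
    _ = f (∑ i, s i • P i) := (map_sum f _ _).symm
    _ = 0 := by rw [hrel, map_zero]
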